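/- (Properties of the Legendre–Fenchel transform of the tilted cumulant, part b) Let p, q be probability distributions on a finite set with equal support, Λ_0(t) := log Σ_ω p(ω)^{1-t} q(ω)^t, Λ_0*(z) := sup_{t∈ℝ} {tz - Λ_0(t)}, and φ(r) := sup_{s≥0} { -(1+s)Λ_0(s/(1+s)) - sr }. Assume r > -log Σ_{ω : p(ω)>0} q(ω) and φ(r) > 0. Then Λ_0*(φ(r) - r) = φ(r). -/

import Mathlib

open scoped BigOperators

noncomputable section

variable {Ω : Type*} [Fintype Ω]

/-- The tilted cumulant generating function `Λ₀(t) = log Σ p^{1-t} q^t`. -/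
def cgf0 (p q : Ω → ℝ) (t : ℝ) : ℝ := Real.log (∑ ω, p ω ^ (1 - t) * q ω ^ t)

/-- Legendre–Fenchel transform of `Λ₀`. -/
def cgf0LF (p q : Ω → ℝ) (z : ℝ) : ℝ := ⨆ t : ℝ, (t * z - cgf0 p q t)

/-- The Hoeffding exponent as a Legendre transform of
`s ↦ -(1+s)Λ₀(s/(1+s)) = s D_{1/(1+s)}(p‖q)`. -/
def hoeffdingLF (p q : Ω → ℝ) (r : ℝ) : ℝ :=
  ⨆ s : Set.Ici (0 : ℝ), (-(1 + (s : ℝ)) * cgf0 p q ((s : ℝ) / (1 + (s : ℝ))) - (s : ℝ) * r)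

private lemma holder_two {ι : Type*} (S : Finset ι) (u v : ι → ℝ)
    (hu : ∀ i ∈ S, 0 ≤ u i) (hv : ∀ i ∈ S, 0 ≤ v i)
    {l m : ℝ} (hl : 0 ≤ l) (hm : 0 ≤ m) (hlm : l + m = 1)
    (hU : 0 < ∑ i ∈ S, u i) (hV : 0 < ∑ i ∈ S, v i) :
    ∑ i ∈ S, u i ^ l * v i ^ m ≤ (∑ i ∈ S, u i) ^ l * (∑ i ∈ S, v i) ^ m := by
  set U := ∑ i ∈ S, u i with hUdef
  set V := ∑ i ∈ S, v i with hVdef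
  have hUl : (0:ℝ) < U ^ l := Real.rpow_pos_of_pos hU l
  have hVm : (0:ℝ) < V ^ m := Real.rpow_pos_of_pos hV m
  have key : ∀ i ∈ S, u i ^ l * v i ^ m ≤ U ^ l * V ^ m * (l * (u i / U) + m * (v i / V)) := by
    intro i hi
    have h1 : (u i / U) ^ l * (v i / V) ^ m ≤ l * (u i / U) + m * (v i / V) :=
      Real.geom_mean_le_arith_mean2_weighted hl hm (div_nonneg (hu i hi) hU.le)
        (div_nonneg (hv i hi) hV.le) hlm
    have h2 : (u i / U) ^ l = u i ^ l / U ^ l := Real.div_rpow (hu i hi) hU.le l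
    have h3 : (v i / V) ^ m = v i ^ m / V ^ m := Real.div_rpow (hv i hi) hV.le m
    calc u i ^ l * v i ^ m
        = U ^ l * V ^ m * ((u i / U) ^ l * (v i / V) ^ m) := by
          rw [h2, h3]; field_simp
      _ ≤ U ^ l * V ^ m * (l * (u i / U) + m * (v i / V)) :=
          mul_le_mul_of_nonneg_left h1 (by positivity)
  calc ∑ i ∈ S, u i ^ l * v i ^ m
      ≤ ∑ i ∈ S, U ^ l * V ^ m * (l * (u i / U) + m * (v i / V)) := Finset.sum_le_sum key
    _ = U ^ l * V ^ m := by
        rw [← Finset.mul_sum]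
        have : ∑ i ∈ S, (l * (u i / U) + m * (v i / V)) = 1 := by
          rw [Finset.sum_add_distrib]
          have e1 : ∑ i ∈ S, l * (u i / U) = l := by
            rw [← Finset.mul_sum, ← Finset.sum_div, ← hUdef, div_self hU.ne', mul_one]
          have e2 : ∑ i ∈ S, m * (v i / V) = m := by
            rw [← Finset.mul_sum, ← Finset.sum_div, ← hVdef, div_self hV.ne', mul_one]
          rw [e1, e2, hlm]
        rw [this, mul_one]

private lemma logsumexp_convex {ι : Type*} {S : Finset ι} (hS : S.Nonempty) (a b : ι → ℝ)
    {x y l m : ℝ} (hl : 0 ≤ l) (hm : 0 ≤ m) (hlm : l + m = 1) :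
    Real.log (∑ i ∈ S, Real.exp (a i + (l * x + m * y) * b i)) ≤
      l * Real.log (∑ i ∈ S, Real.exp (a i + x * b i)) +
      m * Real.log (∑ i ∈ S, Real.exp (a i + y * b i)) := by
  set U := ∑ i ∈ S, Real.exp (a i + x * b i) with hUdef
  set V := ∑ i ∈ S, Real.exp (a i + y * b i) with hVdef
  have hU : 0 < U := Finset.sum_pos (fun i _ => Real.exp_pos _) hS
  have hV : 0 < V := Finset.sum_pos (fun i _ => Real.exp_pos _) hS
  have hterm : ∀ i ∈ S, Real.exp (a i + (l * x + m * y) * b i)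
      = Real.exp (a i + x * b i) ^ l * Real.exp (a i + y * b i) ^ m := by
    intro i _
    rw [← Real.exp_mul, ← Real.exp_mul, ← Real.exp_add]
    congr 1
    linear_combination (-(a i)) * hlm
  have hle : ∑ i ∈ S, Real.exp (a i + (l * x + m * y) * b i) ≤ U ^ l * V ^ m := by
    rw [Finset.sum_congr rfl hterm]
    exact holder_two S _ _ (fun i _ => (Real.exp_pos _).le) (fun i _ => (Real.exp_pos _).le)
      hl hm hlm hU hV
  calc Real.log (∑ i ∈ S, Real.exp (a i + (l * x + m * y) * b i))
      ≤ Real.log (U ^ l * V ^ m) :=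
        Real.log_le_log (Finset.sum_pos (fun i _ => Real.exp_pos _) hS) hle
    _ = l * Real.log U + m * Real.log V := by
        rw [Real.log_mul (Real.rpow_pos_of_pos hU l).ne' (Real.rpow_pos_of_pos hV m).ne',
          Real.log_rpow hU, Real.log_rpow hV]

/-- Legendre–Fenchel transform of the tilted cgf, part (b):
`Λ₀*(φ(r) - r) = φ(r)` whenever `r > -log Σ_{p>0} q` and `φ(r) > 0`. -/
theorem cgf0LF_at_shift (p q : Ω → ℝ)
    (hp0 : ∀ ω, 0 ≤ p ω) (hp1 : ∑ ω, p ω = 1)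
    (hq0 : ∀ ω, 0 ≤ q ω) (hq1 : ∑ ω, q ω = 1)
    (hsupp : ∀ ω, 0 < p ω ↔ 0 < q ω)
    (r : ℝ) (hr : -Real.log (∑ ω ∈ Finset.univ.filter (fun ω => 0 < p ω), q ω) < r)
    (hφ : 0 < hoeffdingLF p q r) :
    cgf0LF p q (hoeffdingLF p q r - r) = hoeffdingLF p q r := by
  classical
  haveI : Nonempty (Set.Ici (0:ℝ)) := ⟨⟨0, Set.self_mem_Ici⟩⟩
  set S := Finset.univ.filter (fun ω => 0 < p ω) with hSdef
  have hpS : ∀ ω ∈ S, 0 < p ω := fun ω hω => (Finset.mem_filter.1 hω).2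
  have hqS : ∀ ω ∈ S, 0 < q ω := fun ω hω => (hsupp ω).1 (hpS ω hω)
  have hS : S.Nonempty := by
    by_contra h
    rw [Finset.not_nonempty_iff_eq_empty] at h
    have hz : ∑ ω, p ω = 0 := by
      apply Finset.sum_eq_zero
      intro ω _
      by_contra hp
      have hp' : 0 < p ω := lt_of_le_of_ne (hp0 ω) (Ne.symm hp)
      have : ω ∈ S := by rw [hSdef]; simp [hp']
      rw [h] at this
      exact absurd this (Finset.notMem_empty ω)
    rw [hp1] at hz; norm_num at hz
  have hout : ∀ ω, ω ∉ S → p ω = 0 ∧ q ω = 0 := by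
    intro ω hω
    have hp : ¬ 0 < p ω := by
      intro h
      exact hω (by rw [hSdef]; simp [h])
    have hp' : p ω = 0 := le_antisymm (not_lt.1 hp) (hp0 ω)
    have hq' : q ω = 0 := le_antisymm (not_lt.1 (fun h => hp ((hsupp ω).2 h))) (hq0 ω)
    exact ⟨hp', hq'⟩
  set a : Ω → ℝ := fun ω => Real.log (p ω) with hadef
  set b : Ω → ℝ := fun ω => Real.log (q ω) - Real.log (p ω) with hbdef
  have hLrep : ∀ t : ℝ, cgf0 p q t = Real.log (∑ ω ∈ S, Real.exp (a ω + t * b ω)) := by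
    intro t
    rw [cgf0]
    congr 1
    have hzero : ∀ ω ∈ Finset.univ, ω ∉ S → p ω ^ (1 - t) * q ω ^ t = 0 := by
      intro ω _ hω
      obtain ⟨hp', hq'⟩ := hout ω hω
      rw [hp', hq']
      rcases eq_or_ne t 0 with ht | ht
      · rw [ht, sub_zero, Real.rpow_one, zero_mul]
      · rw [Real.zero_rpow ht, mul_zero]
    rw [← Finset.sum_subset (Finset.subset_univ S) hzero]
    apply Finset.sum_congr rfl
    intro ω hω
    rw [Real.rpow_def_of_pos (hpS ω hω), Real.rpow_def_of_pos (hqS ω hω), ← Real.exp_add]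
    congr 1
    simp only [hadef, hbdef]
    ring
  have hGpos : ∀ t : ℝ, 0 < ∑ ω ∈ S, Real.exp (a ω + t * b ω) :=
    fun t => Finset.sum_pos (fun ω _ => Real.exp_pos _) hS
  have hqsum : ∑ ω ∈ S, q ω = 1 := by
    rw [Finset.sum_subset (Finset.subset_univ S) (fun ω _ hω => (hout ω hω).2), hq1]
  have hr0 : 0 < r := by
    rw [hqsum, Real.log_one, neg_zero] at hr
    exact hr
  have hL0 : cgf0 p q 0 = 0 := by
    rw [hLrep 0]
    have e : ∀ ω ∈ S, Real.exp (a ω + 0 * b ω) = p ω := by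
      intro ω hω
      rw [zero_mul, add_zero, hadef]
      exact Real.exp_log (hpS ω hω)
    rw [Finset.sum_congr rfl e,
      Finset.sum_subset (Finset.subset_univ S) (fun ω _ hω => (hout ω hω).1), hp1, Real.log_one]
  have hL1 : cgf0 p q 1 = 0 := by
    rw [hLrep 1]
    have e : ∀ ω ∈ S, Real.exp (a ω + 1 * b ω) = q ω := by
      intro ω hω
      have : a ω + 1 * b ω = Real.log (q ω) := by rw [hadef, hbdef]; ring
      rw [this]
      exact Real.exp_log (hqS ω hω)
    rw [Finset.sum_congr rfl e, hqsum, Real.log_one]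
  -- boundedness of the defining sup of hoeffdingLF
  have hbdd : BddAbove (Set.range (fun s : Set.Ici (0:ℝ) =>
      -(1 + (s : ℝ)) * cgf0 p q ((s : ℝ) / (1 + (s : ℝ))) - (s : ℝ) * r)) := by
    by_contra h
    have h0 : hoeffdingLF p q r = 0 := by
      rw [hoeffdingLF]; exact Real.iSup_of_not_bddAbove h
    rw [h0] at hφ
    exact lt_irrefl _ hφ
  have hvle : ∀ s : ℝ, 0 ≤ s →
      -(1 + s) * cgf0 p q (s / (1 + s)) - s * r ≤ hoeffdingLF p q r := by
    intro s hs
    rw [hoeffdingLF]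
    exact le_ciSup hbdd ⟨s, hs⟩
  have happrox : ∀ ε : ℝ, 0 < ε → ∃ s : ℝ, 0 ≤ s ∧
      hoeffdingLF p q r - ε < -(1 + s) * cgf0 p q (s / (1 + s)) - s * r := by
    intro ε hε
    have hlt : hoeffdingLF p q r - ε < ⨆ s : Set.Ici (0:ℝ),
        (-(1 + (s : ℝ)) * cgf0 p q ((s : ℝ) / (1 + (s : ℝ))) - (s : ℝ) * r) := by
      rw [← hoeffdingLF]
      exact sub_lt_self _ hε
    obtain ⟨⟨s, hs⟩, hlt'⟩ := exists_lt_of_lt_ciSup hlt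
    exact ⟨s, hs, hlt'⟩
  -- upper bound on [0,1)
  have hub : ∀ t : ℝ, 0 ≤ t → t < 1 →
      t * (hoeffdingLF p q r - r) - cgf0 p q t ≤ hoeffdingLF p q r := by
    intro t ht0 ht1
    have h1t : (0:ℝ) < 1 - t := by linarith
    have hs : 0 ≤ t / (1 - t) := div_nonneg ht0 h1t.le
    have hts : t / (1 - t) / (1 + t / (1 - t)) = t := by field_simp; ring
    have hv := hvle (t / (1 - t)) hs
    rw [hts] at hv
    have hmul := mul_le_mul_of_nonneg_right hv h1t.le
    have e : (-(1 + t / (1 - t)) * cgf0 p q t - t / (1 - t) * r) * (1 - t)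
        = -cgf0 p q t - t * r := by
      field_simp
      ring
    rw [e] at hmul
    -- hmul : -cgf0 p q t - t * r ≤ hoeffdingLF p q r * (1 - t)
    nlinarith [hmul]
  -- approximation in t-form
  have happrox' : ∀ ε : ℝ, 0 < ε → ∃ t : ℝ, 0 ≤ t ∧ t < 1 ∧
      hoeffdingLF p q r - ε < t * (hoeffdingLF p q r - r) - cgf0 p q t := by
    intro ε hε
    obtain ⟨s, hs, hlt⟩ := happrox ε hε
    have h1s : (0:ℝ) < 1 + s := by linarith
    refine ⟨s / (1 + s), div_nonneg hs h1s.le, ?_, ?_⟩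
    · rw [div_lt_one h1s]; linarith
    · have hvle' := hvle s hs
      have hid : s / (1 + s) * (hoeffdingLF p q r - r) - cgf0 p q (s / (1 + s))
          = (1 - 1 / (1 + s)) * hoeffdingLF p q r
            + (1 / (1 + s)) * (-(1 + s) * cgf0 p q (s / (1 + s)) - s * r) := by
        field_simp
        ring
      rw [hid]
      have hw0 : 0 < 1 / (1 + s) := by positivity
      have hw1 : 1 / (1 + s) ≤ 1 := by rw [div_le_one h1s]; linarith
      nlinarith [mul_lt_mul_of_pos_left hlt hw0, mul_nonneg (sub_nonneg.2 hw1) hε.le]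
  -- maximum over [0,1]
  have hcont : Continuous (fun t : ℝ => t * (hoeffdingLF p q r - r) - cgf0 p q t) := by
    apply Continuous.sub
    · exact continuous_id.mul continuous_const
    · have hrw : (fun t : ℝ => cgf0 p q t)
          = fun t : ℝ => Real.log (∑ ω ∈ S, Real.exp (a ω + t * b ω)) := funext hLrep
      have hG : Continuous (fun t : ℝ => ∑ ω ∈ S, Real.exp (a ω + t * b ω)) := by
        apply continuous_finset_sum
        intro ω _
        exact Real.continuous_exp.comp (continuous_const.add (continuous_id.mul continuous_const))
      have hcl := hG.log (fun t => (hGpos t).ne')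
      rw [← hrw] at hcl
      exact hcl
  obtain ⟨t₀, ht₀mem, ht₀max⟩ := (isCompact_Icc : IsCompact (Set.Icc (0:ℝ) 1)).exists_isMaxOn
    (Set.nonempty_Icc.mpr zero_le_one) hcont.continuousOn
  have hge : hoeffdingLF p q r ≤ t₀ * (hoeffdingLF p q r - r) - cgf0 p q t₀ := by
    by_contra hc
    push_neg at hc
    obtain ⟨t, ht0, ht1, hlt⟩ :=
      happrox' (hoeffdingLF p q r - (t₀ * (hoeffdingLF p q r - r) - cgf0 p q t₀)) (by linarith)
    have hle := ht₀max (Set.mem_Icc.mpr ⟨ht0, ht1.le⟩)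
    simp only [Set.mem_setOf_eq] at hle
    linarith
  have h1lt : 1 * (hoeffdingLF p q r - r) - cgf0 p q 1 < hoeffdingLF p q r := by
    rw [hL1]; linarith
  have ht₀1 : t₀ < 1 := by
    by_contra hcc
    push_neg at hcc
    have ht : t₀ = 1 := le_antisymm ht₀mem.2 hcc
    rw [ht] at hge
    linarith
  have ht₀0 : 0 < t₀ := by
    by_contra hcc
    push_neg at hcc
    have ht : t₀ = 0 := le_antisymm hcc ht₀mem.1
    rw [ht, hL0] at hge
    simp at hge
    linarith
  have heq : t₀ * (hoeffdingLF p q r - r) - cgf0 p q t₀ = hoeffdingLF p q r :=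
    le_antisymm (hub t₀ ht₀mem.1 ht₀1) hge
  -- convexity of cgf0
  have hconv : ∀ x y l m : ℝ, 0 ≤ l → 0 ≤ m → l + m = 1 →
      cgf0 p q (l * x + m * y) ≤ l * cgf0 p q x + m * cgf0 p q y := by
    intro x y l m hl hm hlm
    rw [hLrep, hLrep, hLrep]
    exact logsumexp_convex hS a b hl hm hlm
  -- key step using concavity
  have hstep : ∀ t c l m : ℝ, 0 < l → 0 < m → l + m = 1 → l * t₀ + m * t = c →
      c * (hoeffdingLF p q r - r) - cgf0 p q c ≤ hoeffdingLF p q r →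
      t * (hoeffdingLF p q r - r) - cgf0 p q t ≤ hoeffdingLF p q r := by
    intro t c l m hl hm hlm hcc hcle
    have hC := hconv t₀ t l m hl.le hm.le hlm
    rw [hcc] at hC
    have e1 : l * (t₀ * (hoeffdingLF p q r - r) - cgf0 p q t₀)
        + m * (t * (hoeffdingLF p q r - r) - cgf0 p q t)
        = c * (hoeffdingLF p q r - r) - (l * cgf0 p q t₀ + m * cgf0 p q t) := by
      rw [← hcc]; ring
    rw [heq] at e1
    have h2 : l * hoeffdingLF p q r + m * (t * (hoeffdingLF p q r - r) - cgf0 p q t)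
        ≤ hoeffdingLF p q r := by
      rw [e1]; linarith
    by_contra hcon
    push_neg at hcon
    have h3 := mul_lt_mul_of_pos_left hcon hm
    have h4 : l * hoeffdingLF p q r + m * hoeffdingLF p q r = hoeffdingLF p q r := by
      rw [← add_mul, hlm, one_mul]
    linarith
  -- global upper bound
  have hglob : ∀ t : ℝ, t * (hoeffdingLF p q r - r) - cgf0 p q t ≤ hoeffdingLF p q r := by
    intro t
    rcases le_or_gt t 1 with ht1 | ht1
    · rcases le_or_gt 0 t with ht0 | ht0
      · have hle := ht₀max (Set.mem_Icc.mpr ⟨ht0, ht1⟩)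
        simp only [Set.mem_setOf_eq] at hle
        linarith [heq]
      · have hd : 0 < t₀ - t := by linarith
        apply hstep t 0 (-t / (t₀ - t)) (t₀ / (t₀ - t))
          (div_pos (by linarith) hd) (div_pos ht₀0 hd)
        · rw [← add_div, div_eq_one_iff_eq hd.ne']; ring
        · field_simp
          ring
        · rw [hL0]; simp; linarith
    · have hd : 0 < t - t₀ := by linarith
      apply hstep t 1 ((t - 1) / (t - t₀)) ((1 - t₀) / (t - t₀))
        (div_pos (by linarith) hd) (div_pos (by linarith) hd)
      · rw [← add_div, div_eq_one_iff_eq hd.ne']; ring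
      · field_simp; ring
      · linarith
  -- conclude
  rw [cgf0LF]
  apply le_antisymm
  · exact ciSup_le hglob
  · have hb2 : BddAbove (Set.range fun t : ℝ =>
        t * (hoeffdingLF p q r - r) - cgf0 p q t) := by
      refine ⟨hoeffdingLF p q r, ?_⟩
      rintro x ⟨t, rfl⟩
      exact hglob t
    calc hoeffdingLF p q r = t₀ * (hoeffdingLF p q r - r) - cgf0 p q t₀ := heq.symm
      _ ≤ ⨆ t : ℝ, (t * (hoeffdingLF p q r - r) - cgf0 p q t) := le_ciSup hb2 t₀

end
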